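/- Let X and Y be real Banach spaces and A : X → Y a bounded linear operator, and suppose ε > 0 is such that 0 ∈ s_{4ε}^n(A**(B_{X**})) for every n ∈ ℕ (derivation in Y** with the w*-topology σ(Y**, Y*)). Let T be the set of finite sequences of naturals, N : T → ℕ a bijection with N(s) < N(t) whenever s is a proper initial segment of t (write s < t iff N(s) < N(t)), r_n = 2^n − 1, ℓ(t) = max{n ≥ 0 : r_n ≤ |t|}, and L(t) = max{ℓ(s) : s ≤ t}. Then for every δ > 0 there exist collections (x_t)_{t∈T} ⊆ B_X, (y*_t)_{t∈T} ⊆ B_{Y*}, (x**_t)_{t∈T} ⊆ B_{X**} such that for every t ∈ T: (i) x**_t(A* y*_t) > ε − δ; (ii) for each s with ∅ < s < t, |x**_s(A* y*_t)| < δ/2^{3L(t)+2} and |y*_t(A x_s)| < δ/2^{3L(t)+2}; (iii) if |t| = r_n for some n, then for each ∅ < s < t, |x**_t(A* y*_s)| < δ/2^{3L(t)+2}; (iv) if r_n < |t| < r_{n+1} for some n, then for each ∅ < s < t, |x**_t(A* y*_s) − x**_{t⁻}(A* y*_s)| < δ/2^{3L(t)+2}, where t⁻ is t with its last entry removed; (v)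 for each s with ∅ < s ≤ t, |x**_t(A* y*_s) − y*_s(A x_t)| < δ/2^{3L(t)+2}. -/

import Mathlib

open Filter Topology Pointwise NormedSpace

noncomputable section

variable {X Y : Type*} [NormedAddCommGroup X] [NormedSpace ℝ X] [CompleteSpace X]
  [NormedAddCommGroup Y] [NormedSpace ℝ Y] [CompleteSpace Y]

/-- The adjoint `A* : Y* → X*` of a bounded linear operator, `(A* g)(x) = g (A x)`. -/
def opAdjoint (A : X →L[ℝ] Y) : StrongDual ℝ Y →L[ℝ] StrongDual ℝ X :=
  (ContinuousLinearMap.compSL X Y ℝ (RingHom.id ℝ) (RingHom.id ℝ)).flip A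

/-- A set of functionals is weak-star open (open in `σ(E*, E)`). -/
def IsWeakStarOpen {E : Type*} [NormedAddCommGroup E] [NormedSpace ℝ E]
    (V : Set (StrongDual ℝ E)) : Prop :=
  IsOpen (StrongDual.toWeakDual '' V)

/-- The Szlenk derivation `s_ε(K)`: the points of `K` all of whose weak-star
neighborhoods meet `K` in a set of diameter greater than `ε`. -/
def szlenkDeriv {E : Type*} [NormedAddCommGroup E] [NormedSpace ℝ E] (ε : ℝ)
    (K : Set (StrongDual ℝ E)) : Set (StrongDual ℝ E) :=
  {g ∈ K | ∀ V : Set (StrongDual ℝ E), IsWeakStarOpen V → g ∈ V → ε < Metric.diam (V ∩ K)}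

set_option maxHeartbeats 1000000
set_option linter.unusedSectionVars false
set_option linter.unusedVariables false

/-- the additive group structure of a subspace of a dual space, as a local instance -/
@[reducible]
def subDualACG {W : Type*} [NormedAddCommGroup W] [NormedSpace ℝ W]
    (E : Submodule ℝ (StrongDual ℝ W)) : AddCommGroup E := Submodule.addCommGroup E

/-- the normed group structure of a subspace of a dual space, as a local instance -/
@[reducible]
def subDualNACG {W : Type*} [NormedAddCommGroup W] [NormedSpace ℝ W]
    (E : Submodule ℝ (StrongDual ℝ W)) : NormedAddCommGroup E := Submodule.normedAddCommGroup E

lemma opAdjoint_apply (A : X →L[ℝ] Y) (g : StrongDual ℝ Y) (x : X) :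
    opAdjoint A g x = g (A x) := rfl

section helpers

variable {E : Type*} [NormedAddCommGroup E] [NormedSpace ℝ E]

lemma isWeakStarOpen_nbhd (p : StrongDual ℝ E) (S : Finset E) (τ : ℝ) :
    IsWeakStarOpen {χ : StrongDual ℝ E | ∀ w ∈ S, |χ w - p w| < τ} := by
  have : StrongDual.toWeakDual '' {χ : StrongDual ℝ E | ∀ w ∈ S, |χ w - p w| < τ}
      = ⋂ w ∈ S, {ψ : WeakDual ℝ E | |ψ w - p w| < τ} := by
    ext ψ
    simp only [Set.mem_image, Set.mem_setOf_eq, Set.mem_iInter]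
    constructor
    · rintro ⟨χ, hχ, rfl⟩ w hw; exact hχ w hw
    · intro hψ
      exact ⟨StrongDual.toWeakDual.symm ψ, fun w hw => hψ w hw, by simp⟩
  rw [IsWeakStarOpen, this]
  refine isOpen_biInter_finset fun w _ => ?_
  have : Continuous fun ψ : WeakDual ℝ E => |ψ w - p w| :=
    ((WeakDual.eval_continuous w).sub continuous_const).abs
  exact isOpen_lt this continuous_const

lemma szlenkDeriv_subset (ε : ℝ) (K : Set (StrongDual ℝ E)) : szlenkDeriv ε K ⊆ K :=
  fun _ hg => hg.1

lemma szlenkDeriv_iterate_subset (ε : ℝ) (K : Set (StrongDual ℝ E)) (n : ℕ) :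
    (szlenkDeriv ε)^[n] K ⊆ K := by
  induction n with
  | zero => simp
  | succ n ih =>
    rw [Function.iterate_succ_apply']
    exact (szlenkDeriv_subset ε _).trans ih

end helpers


section more
attribute [local instance] subDualACG subDualNACG
variable {W : Type*} [NormedAddCommGroup W] [NormedSpace ℝ W]


/-- finite norming set for a finite-dimensional subspace of a dual space -/
lemma exists_norming_finset {W : Type*} [NormedAddCommGroup W] [NormedSpace ℝ W]
    (F : Submodule ℝ (StrongDual ℝ W)) [FiniteDimensional ℝ F] {θ : ℝ} (hθ : 0 < θ) (hθ1 : θ < 1) :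
    ∃ S : Finset W, (∀ w ∈ S, ‖w‖ ≤ 1) ∧
      ∀ f ∈ F, ∃ w ∈ S, (1 - θ) * ‖f‖ ≤ |f w| := by
  classical
  set sph := Metric.sphere (0 : F) 1 with hsph
  have hcomp : IsCompact sph := isCompact_sphere _ _
  -- choose a near-norming vector for each point of the sphere
  have hch : ∀ f : F, f ∈ sph → ∃ w : W, ‖w‖ < 1 ∧ 1 - θ/2 < |(f : StrongDual ℝ W) w| := by
    intro f hf
    have hnf : ‖(f : StrongDual ℝ W)‖ = 1 := by
      have : ‖f‖ = 1 := by simpa [hsph] using hf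
      simpa using this
    have : (1 : ℝ) - θ/2 < ‖(f : StrongDual ℝ W)‖ := by rw [hnf]; linarith
    obtain ⟨w, hw1, hw2⟩ := ContinuousLinearMap.exists_lt_apply_of_lt_opNorm _ this
    exact ⟨w, hw1, by simpa [Real.norm_eq_abs] using hw2⟩
  choose! w hw1 hw2 using hch
  -- open cover
  have hcover : sph ⊆ ⋃ f : sph, {g : F | 1 - θ < |(g : StrongDual ℝ W) (w f.1)|} := by
    intro g hg
    refine Set.mem_iUnion.2 ⟨⟨g, hg⟩, ?_⟩
    have := hw2 g hg
    simp only [Set.mem_setOf_eq]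
    linarith
  have hopen : ∀ f : sph, IsOpen {g : F | 1 - θ < |(g : StrongDual ℝ W) (w f.1)|} := by
    intro f
    have hc : Continuous fun g : F => |(g : StrongDual ℝ W) (w f.1)| := by
      have h1 : Continuous fun g : F => (g : StrongDual ℝ W) (w f.1) := by
        exact (ContinuousLinearMap.apply ℝ ℝ (w f.1)).continuous.comp
          (F.subtypeL.continuous)
      exact h1.abs
    exact isOpen_lt continuous_const hc
  obtain ⟨T, hT⟩ := hcomp.elim_finite_subcover _ hopen hcover
  refine ⟨insert 0 (T.image fun f => w f.1), ?_, ?_⟩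
  · intro v hv
    rcases Finset.mem_insert.1 hv with rfl | hv
    · simp
    · obtain ⟨f, _, rfl⟩ := Finset.mem_image.1 hv
      exact (hw1 f.1 f.2).le
  · intro f hf
    by_cases hf0 : f = 0
    · exact ⟨0, Finset.mem_insert_self _ _, by simp [hf0]⟩
    · set f' : F := ⟨f, hf⟩ with hf'
      have hnf : ‖f'‖ ≠ 0 := by
        simp only [norm_ne_zero_iff]
        exact fun hc => hf0 (by simpa [hf'] using congrArg (Subtype.val) hc)
      have hnfpos : 0 < ‖f'‖ := lt_of_le_of_ne (norm_nonneg _) (Ne.symm hnf)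
      set g : F := ‖f'‖⁻¹ • f' with hg
      have hgs : g ∈ sph := by
        rw [hsph, mem_sphere_zero_iff_norm, hg, Submodule.coe_norm,
          Submodule.coe_smul, norm_smul, Real.norm_eq_abs,
          abs_of_nonneg (inv_nonneg.2 hnfpos.le), Submodule.norm_coe,
          inv_mul_cancel₀ hnf]
      have := hT hgs
      obtain ⟨f₀, hf₀T, hgf₀⟩ := by
        simpa only [Set.mem_iUnion, exists_prop] using this
      refine ⟨w f₀.1, Finset.mem_insert_of_mem (Finset.mem_image_of_mem _ hf₀T), ?_⟩
      have hval : (g : StrongDual ℝ W) (w f₀.1) = ‖f'‖⁻¹ * f (w f₀.1) := by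
        simp [hg, hf']
      rw [Set.mem_setOf_eq, hval, abs_mul, abs_of_nonneg (inv_nonneg.2 hnfpos.le)] at hgf₀
      have hnorm_eq : ‖f‖ = ‖f'‖ := by simp [hf']
      rw [hnorm_eq]
      calc (1-θ) * ‖f'‖ ≤ (‖f'‖⁻¹ * |f (w f₀.1)|) * ‖f'‖ :=
            mul_le_mul_of_nonneg_right hgf₀.le hnfpos.le
        _ = |f (w f₀.1)| := by
            rw [mul_comm, ← mul_assoc, mul_inv_cancel₀ hnf, one_mul]
  

end more

section more
attribute [local instance] subDualACG subDualNACG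
variable {W : Type*} [NormedAddCommGroup W] [NormedSpace ℝ W]




/-- finite-dimensional bipolar: a functional vanishing on the common kernel of a
finite-dimensional space of functionals belongs to it -/
lemma mem_of_forall_ker (F : Submodule ℝ (StrongDual ℝ W)) [FiniteDimensional ℝ F]
    (ξ : StrongDual ℝ W) (hξ : ∀ w : W, (∀ f ∈ F, f w = 0) → ξ w = 0) : ξ ∈ F := by
  classical
  by_contra hns
  set E : Submodule ℝ (StrongDual ℝ W) := F ⊔ Submodule.span ℝ {ξ} with hE
  have hFE : F ≤ E := le_sup_left
  have hξE : ξ ∈ E := (le_sup_right : Submodule.span ℝ {ξ} ≤ E)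
    (Submodule.mem_span_singleton_self ξ)
  have hfd : FiniteDimensional ℝ E := by
    have : FiniteDimensional ℝ (Submodule.span ℝ ({ξ} : Set (StrongDual ℝ W))) :=
      FiniteDimensional.span_singleton (K := ℝ) ξ
    infer_instance
  let B : E →ₗ[ℝ] W →ₗ[ℝ] ℝ := (ContinuousLinearMap.coeLM ℝ).comp E.subtype
  let ρ : W →ₗ[ℝ] Module.Dual ℝ E := B.flip
  have hρ : ∀ (w : W) (e : E), ρ w e = (e : StrongDual ℝ W) w := fun _ _ => rfl
  have hrange : LinearMap.range ρ = ⊤ := by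
    by_contra hne
    obtain ⟨v, hv⟩ : ∃ v : Module.Dual ℝ E, v ∉ LinearMap.range ρ := by
      by_contra hall
      push_neg at hall
      exact hne (Submodule.eq_top_iff'.2 hall)
    set R := LinearMap.range ρ
    have hmkv : R.mkQ v ≠ 0 := by
      rw [Ne, Submodule.mkQ_apply, Submodule.Quotient.mk_eq_zero]; exact hv
    obtain ⟨g, hg⟩ : ∃ g : Module.Dual ℝ (Module.Dual ℝ E ⧸ R), g (R.mkQ v) ≠ 0 := by
      by_contra hall
      push_neg at hall
      exact hmkv ((Module.forall_dual_apply_eq_zero_iff ℝ _).1 hall)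
    set Λ : Module.Dual ℝ (Module.Dual ℝ E) := g.comp R.mkQ
    set e : E := (Module.evalEquiv ℝ E).symm Λ with he
    have heval : ∀ φ : Module.Dual ℝ E, Λ φ = φ e := by
      intro φ
      have : Module.evalEquiv ℝ E e = Λ := (Module.evalEquiv ℝ E).apply_symm_apply Λ
      rw [← this, Module.evalEquiv_apply, Module.Dual.eval_apply]
    have hez : ∀ w : W, (e : StrongDual ℝ W) w = 0 := by
      intro w
      have h1 : Λ (ρ w) = 0 := by
        show g (R.mkQ (ρ w)) = 0
        rw [show R.mkQ (ρ w) = 0 by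
          rw [Submodule.mkQ_apply, Submodule.Quotient.mk_eq_zero]
          exact LinearMap.mem_range_self ρ w]
        exact g.map_zero
      rw [heval (ρ w), hρ w e] at h1
      exact h1
    have he0 : e = 0 := by
      have : (e : StrongDual ℝ W) = 0 := ContinuousLinearMap.ext hez
      exact Subtype.ext this
    have : Λ = 0 := by
      rw [← (Module.evalEquiv ℝ E).apply_symm_apply Λ, ← he, he0, map_zero]
    exact hg (by rw [show g (R.mkQ v) = Λ v from rfl, this]; rfl)
  -- now produce the contradiction
  set F' : Submodule ℝ E := F.comap E.subtype with hF'
  have hmemF' : ∀ (f : StrongDual ℝ W) (hf : f ∈ F), (⟨f, hFE hf⟩ : E) ∈ F' := by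
    intro f hf; simpa [hF'] using hf
  set ξE : E := ⟨ξ, hξE⟩ with hξE'
  have hξF' : ξE ∉ F' := by
    intro hc; exact hns (by simpa [hF', hξE'] using hc)
  have hmkξ : F'.mkQ ξE ≠ 0 := by
    rw [Ne, Submodule.mkQ_apply, Submodule.Quotient.mk_eq_zero]; exact hξF'
  obtain ⟨g2, hg2⟩ : ∃ g2 : Module.Dual ℝ (E ⧸ F'), g2 (F'.mkQ ξE) ≠ 0 := by
    by_contra hall
    push_neg at hall
    exact hmkξ ((Module.forall_dual_apply_eq_zero_iff ℝ _).1 hall)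
  set lam : Module.Dual ℝ E := g2.comp F'.mkQ
  obtain ⟨w₀, hw₀⟩ : ∃ w₀ : W, ρ w₀ = lam := by
    have : lam ∈ LinearMap.range ρ := hrange ▸ Submodule.mem_top
    exact this
  have hzero : ∀ f ∈ F, f w₀ = 0 := by
    intro f hf
    have h1 : ρ w₀ ⟨f, hFE hf⟩ = (0 : ℝ) := by
      rw [hw₀]
      show g2 (F'.mkQ ⟨f, hFE hf⟩) = 0
      rw [show F'.mkQ (⟨f, hFE hf⟩ : E) = 0 by
        rw [Submodule.mkQ_apply, Submodule.Quotient.mk_eq_zero]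
        exact hmemF' f hf]
      exact g2.map_zero
    rw [hρ] at h1
    exact h1
  have hξw₀ : ξ w₀ = 0 := hξ w₀ hzero
  have : ξ w₀ ≠ 0 := by
    have : ρ w₀ ξE = g2 (F'.mkQ ξE) := by rw [hw₀]; rfl
    rw [hρ] at this
    exact fun h0 => hg2 (this.symm.trans h0)
  exact this hξw₀

/-- Hahn–Banach through the annihilator of a finite-dimensional subspace of the dual -/
lemma lemmaB (F : Submodule ℝ (StrongDual ℝ W)) [FiniteDimensional ℝ F]
    (χ : StrongDual ℝ W) (c : ℝ) (hc : 0 ≤ c) (hdist : ∀ f ∈ F, c < ‖χ - f‖) :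
    ∃ w : W, ‖w‖ ≤ 1 ∧ (∀ f ∈ F, f w = 0) ∧ c < χ w := by
  classical
  set M : Submodule ℝ W := ⨅ f : F, LinearMap.ker ((f : StrongDual ℝ W) : W →ₗ[ℝ] ℝ) with hM
  have hmemM : ∀ w : W, w ∈ M ↔ ∀ f ∈ F, f w = 0 := by
    intro w
    simp only [hM, Submodule.mem_iInf, LinearMap.mem_ker, ContinuousLinearMap.coe_coe,
      Subtype.forall]
  set χM : M →L[ℝ] ℝ := χ.comp (Submodule.subtypeL M) with hχM
  obtain ⟨gext, hgext, hgnorm⟩ := exists_extension_norm_eq M χM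
  set ξ : StrongDual ℝ W := χ - gext with hξdef
  have hξF : ξ ∈ F := by
    apply mem_of_forall_ker
    intro w hw
    have hwM : w ∈ M := (hmemM w).2 hw
    have := hgext ⟨w, hwM⟩
    simp only [hξdef, ContinuousLinearMap.sub_apply]
    have : gext w = χM ⟨w, hwM⟩ := this
    rw [this]
    simp [hχM]
  have hlt : c < ‖χM‖ := by
    have := hdist ξ hξF
    have h1 : χ - ξ = gext := by simp [hξdef]
    calc c < ‖χ - ξ‖ := this
      _ = ‖gext‖ := by rw [h1]
      _ = ‖χM‖ := hgnorm
  obtain ⟨m, hm1, hm2⟩ := ContinuousLinearMap.exists_lt_apply_of_lt_opNorm χM hlt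
  have hmval : χM m = χ (m : W) := rfl
  have habs : c < |χ (m : W)| := by
    rw [← hmval]; simpa [Real.norm_eq_abs] using hm2
  by_cases hsign : 0 ≤ χ (m : W)
  · refine ⟨(m : W), ?_, fun f hf => ((hmemM _).1 m.2) f hf, ?_⟩
    · exact le_of_lt (by simpa using hm1)
    · rwa [abs_of_nonneg hsign] at habs
  · refine ⟨-(m : W), ?_, ?_, ?_⟩
    · rw [norm_neg]; exact le_of_lt (by simpa using hm1)
    · intro f hf
      rw [map_neg, ((hmemM _).1 m.2) f hf, neg_zero]
    · rw [map_neg]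
      rwa [abs_of_neg (lt_of_not_ge hsign)] at habs


end more

section more
attribute [local instance] subDualACG subDualNACG
variable {W : Type*} [NormedAddCommGroup W] [NormedSpace ℝ W]


/-- finite version of Goldstine's theorem -/
lemma lemmaC {X : Type*} [NormedAddCommGroup X] [NormedSpace ℝ X]
    (φ : StrongDual ℝ (StrongDual ℝ X)) (hφ : ‖φ‖ ≤ 1) {α : Type*} (s : Finset α)
    (g : α → StrongDual ℝ X) {η : ℝ} (hη : 0 < η) :
    ∃ x : X, ‖x‖ ≤ 1 ∧ ∀ a ∈ s, |g a x - φ (g a)| < η := by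
  classical
  set Smap : X →L[ℝ] (↥s → ℝ) := ContinuousLinearMap.pi (fun i => g i.val) with hSmap
  set C : Set (↥s → ℝ) := closure (Smap '' Metric.closedBall 0 1) with hC
  have hCconv : Convex ℝ C :=
    ((convex_closedBall (0 : X) 1).linear_image (Smap : X →ₗ[ℝ] (↥s → ℝ))).closure
  have hvC : (fun i : ↥s => φ (g i.val)) ∈ C := by
    by_contra hv
    obtain ⟨gf, u, hgu1, hgu2⟩ :=
      geometric_hahn_banach_closed_point hCconv isClosed_closure hv
    set lam : ↥s → ℝ := fun i => gf (fun j => if i = j then 1 else 0) with hlam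
    have hrepr : ∀ w : ↥s → ℝ, gf w = ∑ i, w i * lam i := by
      intro w
      have := LinearMap.pi_apply_eq_sum_univ (gf : (↥s → ℝ) →ₗ[ℝ] ℝ) w
      simpa [hlam, smul_eq_mul] using this
    set ystar : StrongDual ℝ X := ∑ i : ↥s, lam i • g i.val with hystar
    have hysx : ∀ x : X, ystar x = gf (Smap x) := by
      intro x
      rw [hrepr]
      simp [hystar, hSmap, mul_comm]
    have hu0 : 0 < u := by
      have h0 : (0 : ↥s → ℝ) ∈ C := by
        apply subset_closure
        exact ⟨0, by simp, by simp⟩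
      simpa using hgu1 _ h0
    have hboundball : ∀ x : X, ‖x‖ ≤ 1 → |ystar x| ≤ u := by
      intro x hx
      have h1 : ystar x < u := by
        rw [hysx]
        exact hgu1 _ (subset_closure ⟨x, by simpa [Metric.mem_closedBall] using hx, rfl⟩)
      have h2 : ystar (-x) < u := by
        rw [hysx]
        exact hgu1 _ (subset_closure ⟨-x, by simpa [Metric.mem_closedBall] using hx, rfl⟩)
      rw [map_neg] at h2
      rw [abs_le]
      constructor <;> linarith
    have hnorm : ‖ystar‖ ≤ u := by
      apply ContinuousLinearMap.opNorm_le_bound _ hu0.le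
      intro x
      by_cases hx0 : x = 0
      · simp [hx0]
      · have hxn : 0 < ‖x‖ := norm_pos_iff.2 hx0
        have := hboundball (‖x‖⁻¹ • x) (by
          rw [norm_smul, Real.norm_eq_abs, abs_of_nonneg (inv_nonneg.2 hxn.le),
            inv_mul_cancel₀ hxn.ne']
          )
        rw [map_smul, smul_eq_mul, abs_mul, abs_of_nonneg (inv_nonneg.2 hxn.le)] at this
        rw [Real.norm_eq_abs]
        calc |ystar x| = ‖x‖ * (‖x‖⁻¹ * |ystar x|) := by field_simp
          _ ≤ ‖x‖ * u := mul_le_mul_of_nonneg_left this hxn.le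
          _ = u * ‖x‖ := mul_comm _ _
    have hgfv : gf (fun i : ↥s => φ (g i.val)) = φ ystar := by
      rw [hrepr]
      rw [hystar, map_sum]
      congr 1
      ext i
      rw [map_smul, smul_eq_mul, mul_comm]
    have : φ ystar ≤ u := by
      calc φ ystar ≤ |φ ystar| := le_abs_self _
        _ ≤ ‖φ‖ * ‖ystar‖ := by
            simpa [Real.norm_eq_abs] using φ.le_opNorm ystar
        _ ≤ 1 * u := mul_le_mul hφ hnorm (norm_nonneg _) zero_le_one
        _ = u := one_mul u
    rw [hgfv] at hgu2
    linarith
  obtain ⟨b, hbmem, hbdist⟩ := Metric.mem_closure_iff.1 hvC η hη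
  obtain ⟨x, hxball, rfl⟩ := hbmem
  refine ⟨x, by simpa [Metric.mem_closedBall] using hxball, ?_⟩
  intro a ha
  have := (dist_pi_lt_iff hη).1 hbdist ⟨a, ha⟩
  rw [Real.dist_eq] at this
  have hval : Smap x ⟨a, ha⟩ = g a x := rfl
  rw [hval] at this
  rw [abs_sub_comm]
  exact this


end more


section lemA
attribute [local instance] subDualACG subDualNACG
variable {E : Type*} [NormedAddCommGroup E] [NormedSpace ℝ E]

lemma isWeakStarOpen_inter {V₁ V₂ : Set (StrongDual ℝ E)} (h₁ : IsWeakStarOpen V₁)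
    (h₂ : IsWeakStarOpen V₂) : IsWeakStarOpen (V₁ ∩ V₂) := by
  rw [IsWeakStarOpen, Set.image_inter (LinearEquiv.injective _)]
  exact IsOpen.inter h₁ h₂

lemma lemmaA {K : Set (StrongDual ℝ E)} {p : StrongDual ℝ E} {ε : ℝ} (hε : 0 < ε)
    (hp : ∀ V, IsWeakStarOpen V → p ∈ V → 4 * ε < Metric.diam (V ∩ K))
    (F : Submodule ℝ (StrongDual ℝ E)) [FiniteDimensional ℝ F]
    {V₀ : Set (StrongDual ℝ E)} (hV₀ : IsWeakStarOpen V₀) (hpV₀ : p ∈ V₀)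
    {c : ℝ} (hc : c < ε) (hc0 : 0 ≤ c) :
    ∃ φ, φ ∈ V₀ ∩ K ∧ ∀ f ∈ F, c < ‖φ - p - f‖ := by
  classical
  by_contra hcon
  push_neg at hcon
  have hcon' : ∀ φ ∈ V₀ ∩ K, ∃ f ∈ F, ‖φ - p - f‖ ≤ c := by
    intro φ hφ
    obtain ⟨f, hf1, hf2⟩ := hcon φ hφ
    exact ⟨f, hf1, hf2⟩
  have hden : 0 < 4*ε - 2*c := by linarith
  set θ : ℝ := (ε - c) / (4*ε - 2*c) with hθdef
  have hθpos : 0 < θ := div_pos (by linarith) hden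
  have hθlt1 : θ < 1 := by
    rw [hθdef, div_lt_one hden]; linarith
  have h1θ : 1 - θ = (3*ε - c) / (4*ε - 2*c) := by
    rw [hθdef, eq_div_iff hden.ne', sub_mul, div_mul_cancel₀ _ hden.ne']
    ring
  have h1θpos : 0 < 1 - θ := by linarith
  obtain ⟨S, hS1, hS2⟩ := exists_norming_finset F hθpos hθlt1
  have hτpos : 0 < ε - c := by linarith
  set V₁ : Set (StrongDual ℝ E) := V₀ ∩ {χ | ∀ w ∈ S, |χ w - p w| < ε - c} with hV₁
  have hV₁open : IsWeakStarOpen V₁ := isWeakStarOpen_inter hV₀ (isWeakStarOpen_nbhd p S (ε - c))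
  have hpV₁ : p ∈ V₁ := ⟨hpV₀, fun w _ => by simpa using hτpos⟩
  have hdiam := hp V₁ hV₁open hpV₁
  set Bd : ℝ := 2*c + 2*(((ε - c) + c)/(1-θ)) with hBd
  have hbound : ∀ a ∈ V₁ ∩ K, ∀ b ∈ V₁ ∩ K, dist a b ≤ Bd := by
    have key : ∀ a ∈ V₁ ∩ K, ∃ fa ∈ F, ‖a - p - fa‖ ≤ c ∧ ‖fa‖ ≤ ((ε - c) + c)/(1-θ) := by
      intro a ha
      obtain ⟨fa, hfa1, hfa2⟩ := hcon' a ⟨ha.1.1, ha.2⟩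
      refine ⟨fa, hfa1, hfa2, ?_⟩
      obtain ⟨w, hwS, hwn⟩ := hS2 fa hfa1
      have heq : fa w = (a w - p w) - ((a - p - fa) w) := by
        simp only [ContinuousLinearMap.sub_apply]
        ring
      have h1 : |fa w| ≤ |a w - p w| + |(a - p - fa) w| := by
        rw [heq]; exact abs_sub _ _
      have h2 : |(a - p - fa) w| ≤ c := by
        calc |(a - p - fa) w| ≤ ‖a - p - fa‖ * ‖w‖ := by
              simpa [Real.norm_eq_abs] using (a - p - fa).le_opNorm w
          _ ≤ c * 1 := mul_le_mul hfa2 (hS1 w hwS) (norm_nonneg _) hc0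
          _ = c := mul_one c
      have h3 : |a w - p w| < ε - c := ha.1.2 w hwS
      have h4 : (1-θ) * ‖fa‖ ≤ (ε - c) + c := by
        calc (1-θ) * ‖fa‖ ≤ |fa w| := hwn
          _ ≤ |a w - p w| + |(a - p - fa) w| := h1
          _ ≤ (ε - c) + c := by linarith
      rw [le_div_iff₀ h1θpos, mul_comm]
      exact h4
    intro a ha b hb
    obtain ⟨fa, _, hfa2, hfa3⟩ := key a ha
    obtain ⟨fb, _, hfb2, hfb3⟩ := key b hb
    have habel : a - b = (a - p - fa) - (b - p - fb) + (fa - fb) := by abel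
    calc dist a b = ‖a - b‖ := dist_eq_norm a b
      _ = ‖(a - p - fa) - (b - p - fb) + (fa - fb)‖ := by rw [habel]
      _ ≤ ‖(a - p - fa) - (b - p - fb)‖ + ‖fa - fb‖ := norm_add_le _ _
      _ ≤ (‖a - p - fa‖ + ‖b - p - fb‖) + (‖fa‖ + ‖fb‖) :=
          add_le_add (norm_sub_le _ _) (norm_sub_le _ _)
      _ ≤ (c + c) + (((ε - c) + c)/(1-θ) + ((ε - c) + c)/(1-θ)) := by
          apply add_le_add (add_le_add hfa2 hfb2) (add_le_add hfa3 hfb3)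
      _ = Bd := by rw [hBd]; ring
  have hBdnn : 0 ≤ Bd := by
    have : 0 ≤ ((ε - c) + c)/(1-θ) := div_nonneg (by linarith) h1θpos.le
    rw [hBd]; linarith
  have hdle : Metric.diam (V₁ ∩ K) ≤ Bd := Metric.diam_le_of_forall_dist_le hBdnn hbound
  have hBdlt : Bd < 4 * ε := by
    have key2 : ((ε - c) + c)/(1-θ) < 2*ε - c := by
      rw [h1θ, div_div_eq_mul_div, div_lt_iff₀ (by linarith : (0:ℝ) < 3*ε - c)]
      nlinarith [sq_nonneg (ε - c), hε, hc]
    rw [hBd]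
    linarith
  linarith

end lemA

section main
variable (A : X →L[ℝ] Y) (ε δ : ℝ) (N : List ℕ → ℕ) (ℓ L : List ℕ → ℕ)

def KsetA : Set (StrongDual ℝ (StrongDual ℝ Y)) :=
  (fun φ : StrongDual ℝ (StrongDual ℝ X) => φ.comp (opAdjoint A)) '' Metric.closedBall 0 1

def CondAt (x : List ℕ → X) (ys : List ℕ → StrongDual ℝ Y) (xss : List ℕ → StrongDual ℝ (StrongDual ℝ X))
    (t : List ℕ) : Prop :=
  ‖x t‖ ≤ 1 ∧ ‖ys t‖ ≤ 1 ∧ ‖xss t‖ ≤ 1 ∧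
  ((xss t).comp (opAdjoint A) ∈
    (szlenkDeriv (4 * ε))^[2 ^ (ℓ t + 1) - 2 - t.length] (KsetA A)) ∧
  (ε - δ < xss t (opAdjoint A (ys t))) ∧
  (∀ s, s ≠ [] → N s < N t → |xss s (opAdjoint A (ys t))| < δ / 2 ^ (3 * L t + 2) ∧
      |ys t (A (x s))| < δ / 2 ^ (3 * L t + 2)) ∧
  ((∃ n, t.length = 2 ^ n - 1) → ∀ s, s ≠ [] → N s < N t →
      |xss t (opAdjoint A (ys s))| < δ / 2 ^ (3 * L t + 2)) ∧
  ((∃ n, 2 ^ n - 1 < t.length ∧ t.length < 2 ^ (n + 1) - 1) → ∀ s, s ≠ [] → N s < N t →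
      |xss t (opAdjoint A (ys s)) - xss t.dropLast (opAdjoint A (ys s))| <
        δ / 2 ^ (3 * L t + 2)) ∧
  (∀ s, s ≠ [] → N s ≤ N t → |xss t (opAdjoint A (ys s)) - ys s (A (x t))| <
      δ / 2 ^ (3 * L t + 2))

def Good (k : ℕ) (x : List ℕ → X) (ys : List ℕ → StrongDual ℝ Y)
    (xss : List ℕ → StrongDual ℝ (StrongDual ℝ X)) : Prop :=
  ∀ t, N t < k → CondAt A ε δ N ℓ L x ys xss t

lemma nat_dropLast_le (hNmono : ∀ s t : List ℕ, s <+: t → s ≠ t → N s < N t)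
    (t : List ℕ) : N t.dropLast ≤ N t := by
  by_cases h : t.dropLast = t
  · rw [h]
  · exact (hNmono _ _ t.dropLast_prefix h).le

lemma condAt_congr (hNmono : ∀ s t : List ℕ, s <+: t → s ≠ t → N s < N t)
    {x x' : List ℕ → X} {ys ys' : List ℕ → StrongDual ℝ Y}
    {xss xss' : List ℕ → StrongDual ℝ (StrongDual ℝ X)} {t : List ℕ}
    (hx : ∀ s, N s ≤ N t → x s = x' s) (hy : ∀ s, N s ≤ N t → ys s = ys' s)
    (hz : ∀ s, N s ≤ N t → xss s = xss' s)
    (h : CondAt A ε δ N ℓ L x ys xss t) : CondAt A ε δ N ℓ L x' ys' xss' t := by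
  obtain ⟨h1, h2, h3, h4, h5, h6, h7, h8, h9⟩ := h
  have hxt := hx t le_rfl
  have hyt := hy t le_rfl
  have hzt := hz t le_rfl
  have hdl := hz t.dropLast (nat_dropLast_le N hNmono t)
  refine ⟨?_, ?_, ?_, ?_, ?_, ?_, ?_, ?_, ?_⟩
  · rw [← hxt]; exact h1
  · rw [← hyt]; exact h2
  · rw [← hzt]; exact h3
  · rw [← hzt]; exact h4
  · rw [← hzt, ← hyt]; exact h5
  · intro s hs hlt
    rw [← hz s hlt.le, ← hyt, ← hx s hlt.le]
    exact h6 s hs hlt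
  · intro hex s hs hlt
    rw [← hzt, ← hy s hlt.le]
    exact h7 hex s hs hlt
  · intro hex s hs hlt
    rw [← hzt, ← hy s hlt.le, ← hdl]
    exact h8 hex s hs hlt
  · intro s hs hle
    rw [← hzt, ← hy s hle, ← hxt]
    exact h9 s hs hle

end main

section ext
attribute [local instance] subDualACG subDualNACG
variable (A : X →L[ℝ] Y) (ε δ : ℝ) (N : List ℕ → ℕ) (ℓ L : List ℕ → ℕ)

lemma extension_step (hε : 0 < ε) (hδ : 0 < δ)
    (h : ∀ n : ℕ, (0 : StrongDual ℝ (StrongDual ℝ Y)) ∈ (szlenkDeriv (4 * ε))^[n] (KsetA A))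
    (hNbij : Function.Bijective N)
    (hNmono : ∀ s t : List ℕ, s <+: t → s ≠ t → N s < N t)
    (hℓ : ∀ t : List ℕ, IsGreatest {n : ℕ | 2 ^ n - 1 ≤ t.length} (ℓ t))
    (k : ℕ) (x : List ℕ → X) (ys : List ℕ → StrongDual ℝ Y) (xss : List ℕ → StrongDual ℝ (StrongDual ℝ X))
    (hgood : Good A ε δ N ℓ L k x ys xss) :
    ∃ x' ys' xss', (∀ s, N s ≠ k → (x' s = x s ∧ ys' s = ys s ∧ xss' s = xss s)) ∧
      Good A ε δ N ℓ L (k+1) x' ys' xss' := by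
  classical
  obtain ⟨t, hNt⟩ := hNbij.surjective k
  set n := ℓ t with hn
  have hn1 : 2 ^ n - 1 ≤ t.length := (hℓ t).1
  have hpown : (1:ℕ) ≤ 2 ^ n := Nat.one_le_two_pow
  have hpown1 : 2 ^ (n+1) = 2 * 2 ^ n := by rw [pow_succ]; ring
  have hn2 : t.length ≤ 2 ^ (n+1) - 2 := by
    by_contra hcon
    push_neg at hcon
    have h1 : 2 ^ (n+1) - 1 ≤ t.length := by omega
    have := (hℓ t).2 h1
    omega
  set G : ℕ := 2 ^ (n+1) - 2 - t.length with hG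
  set η : ℝ := δ / 2 ^ (3 * L t + 2) with hηdef
  have hηpos : 0 < η := by rw [hηdef]; positivity
  set c : ℝ := ε - min δ ε / 2 with hcdef
  have hc1 : c < ε := by
    rw [hcdef]
    have : 0 < min δ ε := lt_min hδ hε
    linarith
  have hc2 : 0 ≤ c := by
    rw [hcdef]
    have : min δ ε ≤ ε := min_le_right _ _
    linarith
  have hcδ : ε - δ < c := by
    rw [hcdef]
    have : min δ ε ≤ δ := min_le_left _ _
    linarith
  set e : List ℕ ≃ ℕ := Equiv.ofBijective N hNbij with he
  have heapp : ∀ s, e s = N s := fun _ => rfl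
  set prevs : Finset (List ℕ) := (Finset.range k).image e.symm with hprevs
  have hmem_prevs : ∀ s, s ∈ prevs ↔ N s < k := by
    intro s
    simp only [hprevs, Finset.mem_image, Finset.mem_range]
    constructor
    · rintro ⟨j, hj, rfl⟩
      rw [← heapp, e.apply_symm_apply]
      exact hj
    · intro hs
      exact ⟨N s, hs, by rw [← heapp, e.symm_apply_apply]⟩
  set prevs' : Finset (List ℕ) := prevs.filter (· ≠ []) with hprevs'
  have hmem_prevs' : ∀ s, s ∈ prevs' ↔ (s ≠ [] ∧ N s < k) := by
    intro s
    simp only [hprevs', Finset.mem_filter, hmem_prevs s]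
    tauto
  set ψ : List ℕ → StrongDual ℝ (StrongDual ℝ Y) := fun s => (xss s).comp (opAdjoint A) with hψ
  set p : StrongDual ℝ (StrongDual ℝ Y) :=
    if t.length = 2 ^ n - 1 then 0 else ψ t.dropLast with hp
  have hdlcase : 2 ^ n - 1 < t.length →
      t ≠ [] ∧ N t.dropLast < k ∧ t.dropLast ≠ t ∧ ℓ t.dropLast = n ∧
        t.dropLast.length = t.length - 1 := by
    intro hlen
    have htne : t ≠ [] := by
      intro hnil
      rw [hnil] at hlen
      simp at hlen
    have hlendl : t.dropLast.length = t.length - 1 := by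
      rw [List.length_dropLast]
    have hlenpos : 1 ≤ t.length := by
      cases t with
      | nil => exact absurd rfl htne
      | cons a l => simp
    have hdlne : t.dropLast ≠ t := by
      intro heq
      have := congrArg List.length heq
      rw [hlendl] at this
      omega
    have hNdl : N t.dropLast < k := by
      rw [← hNt]
      exact hNmono _ _ t.dropLast_prefix hdlne
    have hℓdl : ℓ t.dropLast = n := by
      have h1 : n ≤ ℓ t.dropLast := by
        apply (hℓ t.dropLast).2
        show 2 ^ n - 1 ≤ t.dropLast.length
        rw [hlendl]
        omega
      have h2 : ℓ t.dropLast ≤ n := by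
        apply (hℓ t).2
        show 2 ^ ℓ t.dropLast - 1 ≤ t.length
        have := (hℓ t.dropLast).1
        rw [Set.mem_setOf_eq, hlendl] at this
        omega
      omega
    exact ⟨htne, hNdl, hdlne, hℓdl, hlendl⟩
  have hpmem : p ∈ szlenkDeriv (4 * ε) ((szlenkDeriv (4 * ε))^[G] (KsetA A)) := by
    rcases Nat.lt_or_ge (2 ^ n - 1) t.length with hlen | hlen
    · obtain ⟨htne, hNdl, hdlne, hℓdl, hlendl⟩ := hdlcase hlen
      have hpdl : p = ψ t.dropLast := by rw [hp, if_neg (by omega)]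
      have hcond := (hgood t.dropLast hNdl).2.2.2.1
      rw [hℓdl, hlendl] at hcond
      have hexp : 2 ^ (n+1) - 2 - (t.length - 1) = G + 1 := by omega
      rw [hexp, Function.iterate_succ_apply'] at hcond
      rw [hpdl]
      exact hcond
    · have hlen' : t.length = 2 ^ n - 1 := by omega
      have hpz : p = 0 := by rw [hp, if_pos hlen']
      have hcond := h (G + 1)
      rw [Function.iterate_succ_apply'] at hcond
      rw [hpz]
      exact hcond
  have hploc := hpmem.2
  set gens : Set (StrongDual ℝ (StrongDual ℝ Y)) :=
    ↑(prevs'.image ψ) ∪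
      ↑(prevs'.image (fun s => inclusionInDoubleDual ℝ Y (A (x s)))) ∪ {p} with hgens
  have hgensfin : gens.Finite := by
    apply Set.Finite.union
    · apply Set.Finite.union
      · exact (prevs'.image ψ).finite_toSet
      · exact (prevs'.image _).finite_toSet
    · exact Set.finite_singleton p
  set F' : Submodule ℝ (StrongDual ℝ (StrongDual ℝ Y)) := Submodule.span ℝ gens with hF'
  haveI : FiniteDimensional ℝ F' := FiniteDimensional.span_of_finite ℝ hgensfin
  have hψmem : ∀ s ∈ prevs', ψ s ∈ F' := by
    intro s hs
    apply Submodule.subset_span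
    exact Or.inl (Or.inl (Finset.mem_coe.2 (Finset.mem_image_of_mem ψ hs)))
  have hιmem : ∀ s ∈ prevs', inclusionInDoubleDual ℝ Y (A (x s)) ∈ F' := by
    intro s hs
    apply Submodule.subset_span
    exact Or.inl (Or.inr (Finset.mem_coe.2 (Finset.mem_image_of_mem _ hs)))
  have hpmemF : p ∈ F' := Submodule.subset_span (Or.inr rfl)
  set S : Finset (StrongDual ℝ Y) := prevs'.image ys with hS
  set V₀ : Set (StrongDual ℝ (StrongDual ℝ Y)) := {χ | ∀ w ∈ S, |χ w - p w| < η} with hV₀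
  have hV₀open : IsWeakStarOpen V₀ := isWeakStarOpen_nbhd p S η
  have hpV₀ : p ∈ V₀ := fun w _ => by simpa using hηpos
  obtain ⟨φ, ⟨hφV₀, hφK'⟩, hφfar⟩ :=
    lemmaA hε hploc F' hV₀open hpV₀ hc1 hc2
  have hφV₀' : ∀ w ∈ S, |φ w - p w| < η := hφV₀
  have hfar' : ∀ f ∈ F', c < ‖φ - f‖ := by
    intro f hf
    have h1 := hφfar (f - p) (sub_mem hf hpmemF)
    have h2 : φ - p - (f - p) = φ - f := by abel
    rwa [h2] at h1
  have hφK : φ ∈ KsetA A := szlenkDeriv_iterate_subset _ _ G hφK'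
  obtain ⟨xnew'', hxnew''ball, hxnew''eq⟩ := hφK
  have hxnew''norm : ‖xnew''‖ ≤ 1 := by
    rwa [Metric.mem_closedBall, dist_zero_right xnew''] at hxnew''ball
  obtain ⟨ynew, hynorm, hyann, hylarge⟩ := lemmaB F' φ c hc2 hfar'
  set ys' : List ℕ → StrongDual ℝ Y := Function.update ys t ynew with hys'
  obtain ⟨xnew, hxnorm, hxapprox⟩ :=
    lemmaC xnew'' hxnew''norm (insert t prevs') (fun s => opAdjoint A (ys' s)) hηpos
  set x' : List ℕ → X := Function.update x t xnew with hx'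
  set xss' : List ℕ → StrongDual ℝ (StrongDual ℝ X) := Function.update xss t xnew'' with hxss'
  have hne_of_lt : ∀ s : List ℕ, N s < k → s ≠ t := by
    intro s hs hst
    rw [hst, hNt] at hs
    omega
  have hagree : ∀ s, N s ≠ k → (x' s = x s ∧ ys' s = ys s ∧ xss' s = xss s) := by
    intro s hs
    have hst : s ≠ t := fun hc => hs (by rw [hc, hNt])
    exact ⟨Function.update_of_ne hst _ _, Function.update_of_ne hst _ _,
      Function.update_of_ne hst _ _⟩
  refine ⟨x', ys', xss', hagree, ?_⟩
  intro t' hlt'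
  rcases Nat.lt_succ_iff_lt_or_eq.1 hlt' with hlt | heqk
  · have hagree' : ∀ s, N s ≤ N t' → (x s = x' s ∧ ys s = ys' s ∧ xss s = xss' s) := by
      intro s hsle
      have hsk : N s ≠ k := by omega
      obtain ⟨h1, h2, h3⟩ := hagree s hsk
      exact ⟨h1.symm, h2.symm, h3.symm⟩
    exact condAt_congr A ε δ N ℓ L hNmono (fun s hs => (hagree' s hs).1)
      (fun s hs => (hagree' s hs).2.1) (fun s hs => (hagree' s hs).2.2)
      (hgood t' hlt)
  · have htt' : t' = t := hNbij.injective (by rw [heqk, hNt])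
    subst htt'
    have hxt : x' t' = xnew := Function.update_self _ _ _
    have hyt : ys' t' = ynew := Function.update_self _ _ _
    have hzt : xss' t' = xnew'' := Function.update_self _ _ _
    have hφval : ∀ g : StrongDual ℝ Y, xnew'' (opAdjoint A g) = φ g := by
      intro g
      rw [← hxnew''eq]
      rfl
    refine ⟨?_, ?_, ?_, ?_, ?_, ?_, ?_, ?_, ?_⟩
    · rw [hxt]; exact hxnorm
    · rw [hyt]; exact hynorm
    · rw [hzt]; exact hxnew''norm
    · have hxeq : ContinuousLinearMap.comp xnew'' (opAdjoint A) = φ := hxnew''eq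
      rw [hzt, hxeq]
      exact hφK'
    · rw [hzt, hyt, hφval]
      exact lt_trans hcδ hylarge
    · intro s hs hlt
      rw [hNt] at hlt
      have hst : s ≠ t' := hne_of_lt s hlt
      have hsp : s ∈ prevs' := (hmem_prevs' s).2 ⟨hs, hlt⟩
      constructor
      · rw [hxss', Function.update_of_ne hst, hyt]
        have hv : xss s (opAdjoint A ynew) = ψ s ynew := rfl
        rw [hv, hyann (ψ s) (hψmem s hsp)]
        simp only [abs_zero]
        positivity
      · rw [hyt, hx', Function.update_of_ne hst]
        have hv : ynew (A (x s)) = inclusionInDoubleDual ℝ Y (A (x s)) ynew :=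
          (NormedSpace.dual_def ℝ Y (A (x s)) ynew).symm
        rw [hv, hyann _ (hιmem s hsp)]
        simp only [abs_zero]
        positivity
    · rintro ⟨n', hn'⟩ s hs hlt
      rw [hNt] at hlt
      have hst : s ≠ t' := hne_of_lt s hlt
      have hsp : s ∈ prevs' := (hmem_prevs' s).2 ⟨hs, hlt⟩
      have hb : (1:ℕ) ≤ 2 ^ n' := Nat.one_le_two_pow
      have hb2 : 2 ^ (n' + 1) = 2 * 2 ^ n' := by rw [pow_succ]; ring
      have hnn' : n' = n := by
        have h1 : n' ≤ n := (hℓ t').2 (by rw [Set.mem_setOf_eq, hn'])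
        have h2 : n ≤ n' := by
          by_contra hcon
          push_neg at hcon
          have hpp : 2 ^ (n' + 1) ≤ 2 ^ n := Nat.pow_le_pow_right (by norm_num) hcon
          have hX : 2 ^ n - 1 ≤ 2 ^ n' - 1 := by rw [← hn']; exact hn1
          omega
        omega
      have hlen' : t'.length = 2 ^ n - 1 := by rw [hn', hnn']
      have hp0 : p = 0 := by rw [hp, if_pos hlen']
      rw [hzt, hys', Function.update_of_ne hst, hφval]
      have hmemS : ys s ∈ S := Finset.mem_image_of_mem ys hsp
      have := hφV₀' (ys s) hmemS
      rw [hp0] at this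
      simpa using this
    · rintro ⟨n', hn'1, hn'2⟩ s hs hlt
      rw [hNt] at hlt
      have hst : s ≠ t' := hne_of_lt s hlt
      have hsp : s ∈ prevs' := (hmem_prevs' s).2 ⟨hs, hlt⟩
      have hb : (1:ℕ) ≤ 2 ^ n' := Nat.one_le_two_pow
      have hb2 : 2 ^ (n' + 1) = 2 * 2 ^ n' := by rw [pow_succ]; ring
      have hnn' : n' = n := by
        have h1 : n' ≤ n := (hℓ t').2 (by rw [Set.mem_setOf_eq]; omega)
        have h2 : n ≤ n' := by
          by_contra hcon
          push_neg at hcon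
          have hpp : 2 ^ (n' + 1) ≤ 2 ^ n := Nat.pow_le_pow_right (by norm_num) hcon
          omega
        omega
      have hlen : 2 ^ n - 1 < t'.length := by rw [← hnn']; exact hn'1
      obtain ⟨htne, hNdl, hdlne, hℓdl, hlendl⟩ := hdlcase hlen
      have hpdl : p = ψ t'.dropLast := by rw [hp, if_neg (by omega)]
      rw [hzt, hys', Function.update_of_ne hst, hxss']
      rw [Function.update_of_ne hdlne]
      have e1 : xnew'' (opAdjoint A (ys s)) = φ (ys s) := hφval _
      have e2 : xss t'.dropLast (opAdjoint A (ys s)) = p (ys s) := by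
        rw [hpdl]
        rfl
      rw [e1, e2]
      exact hφV₀' (ys s) (Finset.mem_image_of_mem ys hsp)
    · intro s hs hle
      rw [hNt] at hle
      have hins : s ∈ insert t' prevs' := by
        rcases Nat.lt_or_ge (N s) k with hlt | hge
        · exact Finset.mem_insert_of_mem ((hmem_prevs' s).2 ⟨hs, hlt⟩)
        · have hek : N s = k := le_antisymm hle hge
          have hst : s = t' := hNbij.injective (by rw [hek, hNt])
          rw [hst]
          exact Finset.mem_insert_self _ _
      have happ := hxapprox s hins
      rw [hzt, hxt]
      have e3 : ys' s (A xnew) = opAdjoint A (ys' s) xnew := rfl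
      rw [e3, abs_sub_comm]
      exact happ

end ext

section chain
variable (A : X →L[ℝ] Y) (ε δ : ℝ) (N : List ℕ → ℕ) (ℓ L : List ℕ → ℕ)

lemma extension_step' (hε : 0 < ε) (hδ : 0 < δ)
    (h : ∀ n : ℕ, (0 : StrongDual ℝ (StrongDual ℝ Y)) ∈ (szlenkDeriv (4 * ε))^[n] (KsetA A))
    (hNbij : Function.Bijective N)
    (hNmono : ∀ s t : List ℕ, s <+: t → s ≠ t → N s < N t)
    (hℓ : ∀ t : List ℕ, IsGreatest {n : ℕ | 2 ^ n - 1 ≤ t.length} (ℓ t))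
    (k : ℕ)
    (d : (List ℕ → X) × (List ℕ → StrongDual ℝ Y) × (List ℕ → StrongDual ℝ (StrongDual ℝ X)))
    (hd : Good A ε δ N ℓ L k d.1 d.2.1 d.2.2) :
    ∃ d' : (List ℕ → X) × (List ℕ → StrongDual ℝ Y) × (List ℕ → StrongDual ℝ (StrongDual ℝ X)),
      (∀ s, N s ≠ k → (d'.1 s = d.1 s ∧ d'.2.1 s = d.2.1 s ∧ d'.2.2 s = d.2.2 s)) ∧
      Good A ε δ N ℓ L (k+1) d'.1 d'.2.1 d'.2.2 := by
  obtain ⟨x', ys', xss', hag, hg⟩ :=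
    extension_step A ε δ N ℓ L hε hδ h hNbij hNmono hℓ k d.1 d.2.1 d.2.2 hd
  exact ⟨(x', ys', xss'), hag, hg⟩

noncomputable def chainF (hε : 0 < ε) (hδ : 0 < δ)
    (h : ∀ n : ℕ, (0 : StrongDual ℝ (StrongDual ℝ Y)) ∈ (szlenkDeriv (4 * ε))^[n] (KsetA A))
    (hNbij : Function.Bijective N)
    (hNmono : ∀ s t : List ℕ, s <+: t → s ≠ t → N s < N t)
    (hℓ : ∀ t : List ℕ, IsGreatest {n : ℕ | 2 ^ n - 1 ≤ t.length} (ℓ t)) :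
    ∀ k : ℕ, {d : (List ℕ → X) × (List ℕ → StrongDual ℝ Y) × (List ℕ → StrongDual ℝ (StrongDual ℝ X)) //
      Good A ε δ N ℓ L k d.1 d.2.1 d.2.2} :=
  fun k => Nat.rec
    ⟨(fun _ => 0, fun _ => 0, fun _ => 0), fun t ht => absurd ht (Nat.not_lt_zero _)⟩
    (fun k ih =>
      ⟨(extension_step' A ε δ N ℓ L hε hδ h hNbij hNmono hℓ k ih.1 ih.2).choose,
        (extension_step' A ε δ N ℓ L hε hδ h hNbij hNmono hℓ k ih.1 ih.2).choose_spec.2⟩) k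

lemma chainF_succ_agree (hε : 0 < ε) (hδ : 0 < δ)
    (h : ∀ n : ℕ, (0 : StrongDual ℝ (StrongDual ℝ Y)) ∈ (szlenkDeriv (4 * ε))^[n] (KsetA A))
    (hNbij : Function.Bijective N)
    (hNmono : ∀ s t : List ℕ, s <+: t → s ≠ t → N s < N t)
    (hℓ : ∀ t : List ℕ, IsGreatest {n : ℕ | 2 ^ n - 1 ≤ t.length} (ℓ t))
    (k : ℕ) :
    ∀ s, N s ≠ k →
      ((chainF A ε δ N ℓ L hε hδ h hNbij hNmono hℓ (k+1)).1.1 s =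
          (chainF A ε δ N ℓ L hε hδ h hNbij hNmono hℓ k).1.1 s ∧
        (chainF A ε δ N ℓ L hε hδ h hNbij hNmono hℓ (k+1)).1.2.1 s =
          (chainF A ε δ N ℓ L hε hδ h hNbij hNmono hℓ k).1.2.1 s ∧
        (chainF A ε δ N ℓ L hε hδ h hNbij hNmono hℓ (k+1)).1.2.2 s =
          (chainF A ε δ N ℓ L hε hδ h hNbij hNmono hℓ k).1.2.2 s) :=
  (extension_step' A ε δ N ℓ L hε hδ h hNbij hNmono hℓ k
    (chainF A ε δ N ℓ L hε hδ h hNbij hNmono hℓ k).1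
    (chainF A ε δ N ℓ L hε hδ h hNbij hNmono hℓ k).2).choose_spec.1

lemma chainF_stable (hε : 0 < ε) (hδ : 0 < δ)
    (h : ∀ n : ℕ, (0 : StrongDual ℝ (StrongDual ℝ Y)) ∈ (szlenkDeriv (4 * ε))^[n] (KsetA A))
    (hNbij : Function.Bijective N)
    (hNmono : ∀ s t : List ℕ, s <+: t → s ≠ t → N s < N t)
    (hℓ : ∀ t : List ℕ, IsGreatest {n : ℕ | 2 ^ n - 1 ≤ t.length} (ℓ t)) :
    ∀ (k : ℕ) (s : List ℕ), N s < k →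
      ((chainF A ε δ N ℓ L hε hδ h hNbij hNmono hℓ k).1.1 s =
          (chainF A ε δ N ℓ L hε hδ h hNbij hNmono hℓ (N s + 1)).1.1 s ∧
        (chainF A ε δ N ℓ L hε hδ h hNbij hNmono hℓ k).1.2.1 s =
          (chainF A ε δ N ℓ L hε hδ h hNbij hNmono hℓ (N s + 1)).1.2.1 s ∧
        (chainF A ε δ N ℓ L hε hδ h hNbij hNmono hℓ k).1.2.2 s =
          (chainF A ε δ N ℓ L hε hδ h hNbij hNmono hℓ (N s + 1)).1.2.2 s) := by
  intro k
  induction k with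
  | zero => intro s hs; omega
  | succ k ih =>
    intro s hs
    rcases Nat.lt_succ_iff_lt_or_eq.1 hs with hlt | heq
    · obtain ⟨h1, h2, h3⟩ :=
        chainF_succ_agree A ε δ N ℓ L hε hδ h hNbij hNmono hℓ k s (by omega)
      obtain ⟨h4, h5, h6⟩ := ih s hlt
      exact ⟨h1.trans h4, h2.trans h5, h3.trans h6⟩
    · rw [heq]
      exact ⟨rfl, rfl, rfl⟩

end chain


/-- Lemma 6.3 of the paper: construction of trees of vectors,
functionals and bidual vectors indexed by `T = List ℕ` with the prescribed
biorthogonality estimates, under the assumption `0 ∈ s_{4ε}^n(A** B_{X**})` for all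
`n`.  Here `N` is a bijective enumeration of `T` compatible with the prefix order,
`r_n = 2^n − 1`, `ℓ t = max{n : r_n ≤ |t|}` and `L t = max{ℓ s : N s ≤ N t}`. -/
theorem statement13 (A : X →L[ℝ] Y) (ε : ℝ) (hε : 0 < ε)
    (h : ∀ n : ℕ, (0 : StrongDual ℝ (StrongDual ℝ Y)) ∈ (szlenkDeriv (4 * ε))^[n]
      ((fun φ : StrongDual ℝ (StrongDual ℝ X) => φ.comp (opAdjoint A)) '' Metric.closedBall 0 1))
    (N : List ℕ → ℕ) (hNbij : Function.Bijective N)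
    (hNmono : ∀ s t : List ℕ, s <+: t → s ≠ t → N s < N t)
    (ℓ L : List ℕ → ℕ)
    (hℓ : ∀ t : List ℕ, IsGreatest {n : ℕ | 2 ^ n - 1 ≤ t.length} (ℓ t))
    (hL : ∀ t : List ℕ, IsGreatest {m : ℕ | ∃ s : List ℕ, N s ≤ N t ∧ ℓ s = m} (L t))
    (δ : ℝ) (hδ : 0 < δ) :
    ∃ (x : List ℕ → X) (ys : List ℕ → StrongDual ℝ Y) (xss : List ℕ → StrongDual ℝ (StrongDual ℝ X)),
      (∀ t, ‖x t‖ ≤ 1) ∧ (∀ t, ‖ys t‖ ≤ 1) ∧ (∀ t, ‖xss t‖ ≤ 1) ∧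
      ∀ t : List ℕ,
        (ε - δ < xss t (opAdjoint A (ys t))) ∧
        (∀ s : List ℕ, s ≠ [] → N s < N t →
          |xss s (opAdjoint A (ys t))| < δ / 2 ^ (3 * L t + 2) ∧
          |ys t (A (x s))| < δ / 2 ^ (3 * L t + 2)) ∧
        ((∃ n : ℕ, t.length = 2 ^ n - 1) →
          ∀ s : List ℕ, s ≠ [] → N s < N t →
            |xss t (opAdjoint A (ys s))| < δ / 2 ^ (3 * L t + 2)) ∧
        ((∃ n : ℕ, 2 ^ n - 1 < t.length ∧ t.length < 2 ^ (n + 1) - 1) →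
          ∀ s : List ℕ, s ≠ [] → N s < N t →
            |xss t (opAdjoint A (ys s)) - xss t.dropLast (opAdjoint A (ys s))| <
              δ / 2 ^ (3 * L t + 2)) ∧
        (∀ s : List ℕ, s ≠ [] → N s ≤ N t →
          |xss t (opAdjoint A (ys s)) - ys s (A (x t))| < δ / 2 ^ (3 * L t + 2)) := by
  classical
  have hK : ∀ n : ℕ, (0 : StrongDual ℝ (StrongDual ℝ Y)) ∈ (szlenkDeriv (4 * ε))^[n] (KsetA A) := h
  set C : ∀ k : ℕ, {d : (List ℕ → X) × (List ℕ → StrongDual ℝ Y) × (List ℕ → StrongDual ℝ (StrongDual ℝ X)) //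
      Good A ε δ N ℓ L k d.1 d.2.1 d.2.2} :=
    chainF A ε δ N ℓ L hε hδ hK hNbij hNmono hℓ with hC
  set x : List ℕ → X := fun t => (C (N t + 1)).1.1 t with hx
  set ys : List ℕ → StrongDual ℝ Y := fun t => (C (N t + 1)).1.2.1 t with hys
  set xss : List ℕ → StrongDual ℝ (StrongDual ℝ X) := fun t => (C (N t + 1)).1.2.2 t with hxss
  have hcond : ∀ t : List ℕ, CondAt A ε δ N ℓ L x ys xss t := by
    intro t
    have hgood := (C (N t + 1)).2 t (Nat.lt_succ_self _)
    apply condAt_congr A ε δ N ℓ L hNmono _ _ _ hgood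
    · intro s hs
      rw [hx]
      exact (chainF_stable A ε δ N ℓ L hε hδ hK hNbij hNmono hℓ (N t + 1) s (by omega)).1
    · intro s hs
      rw [hys]
      exact (chainF_stable A ε δ N ℓ L hε hδ hK hNbij hNmono hℓ (N t + 1) s (by omega)).2.1
    · intro s hs
      rw [hxss]
      exact (chainF_stable A ε δ N ℓ L hε hδ hK hNbij hNmono hℓ (N t + 1) s (by omega)).2.2
  refine ⟨x, ys, xss, fun t => (hcond t).1, fun t => (hcond t).2.1,
    fun t => (hcond t).2.2.1, fun t => ?_⟩
  obtain ⟨-, -, -, -, h5, h6, h7, h8, h9⟩ := hcond t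
  exact ⟨h5, h6, h7, h8, h9⟩

end
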